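/- arXiv:2406.17344 — 3 statements merged into one kernel-verified Lean document; each statement's English description precedes it below -/
import Mathlib

section
/- Let b be a connected locally finite weighted graph over V with values in an ordered field, U ⊆ V, and π = π_U^b. For x, y ∈ U, x → y (there is a directed π-path from x to y) if and only if there exists a path x = x₀ ∼ x₁ ∼ ⋯ ∼ xₙ = y inside U with b(x_i, x_{i+1}) ≃ b(x_i) for all i = 0, …, n−1. In this case b(x_{i+1}) ≳ b(x_i) for all i and b(y) ≳ b(x). -/
open Classical
open scoped ENNReal

namespace NAG

/-- The real part of an at most finite element of an ordered field:
the supremum of the rationals below it. -/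
noncomputable def rp {K : Type*} [Field K] [LinearOrder K] [IsStrictOrderedRing K] (k : K) : ℝ :=
  sSup {r : ℝ | ∃ q : ℚ, r = (q : ℝ) ∧ (q : K) ≤ k}

/-- `k₁ ≃ k₂` : the quotient is bounded above and below by positive rationals. -/
def Comparable {K : Type*} [Field K] [LinearOrder K] [IsStrictOrderedRing K] (k₁ k₂ : K) : Prop :=
  ∃ c₁ c₂ : ℚ, 0 < c₁ ∧ 0 < c₂ ∧ (c₁ : K) < k₁ / k₂ ∧ k₁ / k₂ < (c₂ : K)

/-- `k₁ ≺≺ k₂` : the quotient is smaller than every positive rational. -/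
def MuchLT {K : Type*} [Field K] [LinearOrder K] [IsStrictOrderedRing K] (k₁ k₂ : K) : Prop :=
  ∀ c : ℚ, 0 < c → k₁ / k₂ < (c : K)

/-- `k₁ ≾ k₂` : the quotient is bounded above by some positive rational. -/
def LessSim {K : Type*} [Field K] [LinearOrder K] [IsStrictOrderedRing K] (k₁ k₂ : K) : Prop :=
  ∃ c : ℚ, 0 < c ∧ k₁ / k₂ < (c : K)

/-- A (locally finite) weighted graph over `V` with values in an ordered field `K`. -/
structure Graph (V K : Type*) [Field K] [LinearOrder K] [IsStrictOrderedRing K] where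
  w : V → V → K
  symm : ∀ x y, w x y = w y x
  nonneg : ∀ x y, 0 ≤ w x y
  loopless : ∀ x, w x x = 0
  locFin : ∀ x, {y | w x y ≠ 0}.Finite

variable {V K : Type*} [Field K] [LinearOrder K] [IsStrictOrderedRing K]

/-- `b(x) = Σ_y b(x,y)`. -/
noncomputable def Graph.deg (G : Graph V K) (x : V) : K := ∑ᶠ y, G.w x y

def Graph.Adj (G : Graph V K) (x y : V) : Prop := 0 < G.w x y

def Graph.Connected (G : Graph V K) : Prop :=
  ∀ x y : V, ∃ (n : ℕ) (p : ℕ → V), p 0 = x ∧ p n = y ∧ ∀ i < n, G.Adj (p i) (p (i + 1))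

def Graph.ConnectedOn (G : Graph V K) (S : Set V) : Prop :=
  ∀ x ∈ S, ∀ y ∈ S, ∃ (n : ℕ) (p : ℕ → V),
    p 0 = x ∧ p n = y ∧ (∀ i ≤ n, p i ∈ S) ∧ ∀ i < n, G.Adj (p i) (p (i + 1))

/-- normalized weight `p(x,y) = b(x,y)/b(x)`. -/
noncomputable def Graph.p (G : Graph V K) (x y : V) : K := G.w x y / G.deg x

/-- The real transition matrix `π_U^b`. -/
noncomputable def Graph.pi (G : Graph V K) (U : Set V) (x y : V) : ℝ :=
  if x ∈ U then rp (G.p x y) else if x = y then 1 else 0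

/-- A directed path of length `n` from `x` to `y` for a real kernel `m`. -/
def DirPath {V : Type*} (m : V → V → ℝ) (x y : V) (n : ℕ) (p : ℕ → V) : Prop :=
  p 0 = x ∧ p n = y ∧ ∀ i < n, 0 < m (p i) (p (i + 1))

/-- `x → y` : reachability by directed paths. -/
def Reaches {V : Type*} (m : V → V → ℝ) (x y : V) : Prop :=
  x = y ∨ ∃ n p, DirPath m x y n p

/-- `x ↔ y` : mutual reachability (same strongly connected component). -/
def SameSCC {V : Type*} (m : V → V → ℝ) (x y : V) : Prop :=
  Reaches m x y ∧ Reaches m y x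

lemma w_le_deg (G : Graph V K) (x y : V) : G.w x y ≤ G.deg x :=
  single_le_finsum y (G.locFin x) (fun j => G.nonneg x j)

lemma rp_pos_iff {k : K} (h0 : 0 ≤ k) (h1 : k ≤ 1) :
    0 < rp k ↔ ∃ q : ℚ, 0 < q ∧ (q : K) ≤ k := by
  have hS0 : (0 : ℝ) ∈ {r : ℝ | ∃ q : ℚ, r = (q : ℝ) ∧ (q : K) ≤ k} :=
    ⟨0, by norm_num, by simpa using h0⟩
  have hSb : BddAbove {r : ℝ | ∃ q : ℚ, r = (q : ℝ) ∧ (q : K) ≤ k} := by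
    refine ⟨1, fun r hr => ?_⟩
    obtain ⟨q, rfl, hq⟩ := hr
    have hq1 : (q : K) ≤ 1 := hq.trans h1
    have : (q : ℚ) ≤ 1 := by exact_mod_cast hq1
    exact_mod_cast this
  constructor
  · intro h
    obtain ⟨r, hr, hr0⟩ := exists_lt_of_lt_csSup ⟨0, hS0⟩ h
    obtain ⟨q, rfl, hqk⟩ := hr
    exact ⟨q, by exact_mod_cast hr0, hqk⟩
  · rintro ⟨q, hq0, hqk⟩
    have : (q : ℝ) ≤ rp k := le_csSup hSb ⟨q, rfl, hqk⟩
    have hq0' : (0 : ℝ) < q := by exact_mod_cast hq0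
    linarith

lemma comparable_iff_pi_pos (G : Graph V K) (hdeg : ∀ x, 0 < G.deg x)
    (U : Set V) {x : V} (y : V) (hx : x ∈ U) :
    0 < G.pi U x y ↔ Comparable (G.w x y) (G.deg x) := by
  have hd := hdeg x
  have h0 : 0 ≤ G.p x y := div_nonneg (G.nonneg x y) hd.le
  have h1 : G.p x y ≤ 1 := (div_le_one hd).2 (w_le_deg G x y)
  rw [Graph.pi, if_pos hx, rp_pos_iff h0 h1]
  constructor
  · rintro ⟨q, hq0, hqk⟩
    refine ⟨q / 2, 2, by positivity, by norm_num, ?_, ?_⟩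
    · calc ((q / 2 : ℚ) : K) < (q : K) := by
            push_cast; linarith [(by exact_mod_cast hq0 : (0:K) < (q:K))]
        _ ≤ G.w x y / G.deg x := hqk
    · calc G.w x y / G.deg x ≤ 1 := h1
        _ < ((2 : ℚ) : K) := by norm_num
  · rintro ⟨c₁, c₂, hc₁, hc₂, hlt, -⟩
    exact ⟨c₁, hc₁, hlt.le⟩

lemma lessSim_of_le {a b : K} (hab : a ≤ b) (hb : 0 < b) : LessSim a b :=
  ⟨2, by norm_num, by
    have : a / b ≤ 1 := (div_le_one hb).2 hab
    calc a / b ≤ 1 := this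
      _ < ((2 : ℚ) : K) := by norm_num⟩

lemma lessSim_trans {a b c : K} (hb : 0 < b) (hc : 0 < c)
    (h1 : LessSim a b) (h2 : LessSim b c) : LessSim a c := by
  obtain ⟨c₁, hc₁, h1⟩ := h1
  obtain ⟨c₂, hc₂, h2⟩ := h2
  refine ⟨c₁ * c₂, by positivity, ?_⟩
  have heq : a / c = (a / b) * (b / c) := by field_simp
  have hbc0 : 0 ≤ b / c := by positivity
  have hab0 : a / b < (c₁ : K) := h1
  push_cast
  rw [heq]
  have hc₁K : (0:K) < (c₁ : ℚ) := by exact_mod_cast hc₁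
  nlinarith [div_pos hb hc]

lemma step_lessSim (G : Graph V K) (hdeg : ∀ x, 0 < G.deg x) {x y : V}
    (h : Comparable (G.w x y) (G.deg x)) : LessSim (G.deg x) (G.deg y) := by
  obtain ⟨c₁, c₂, hc₁, hc₂, hlt, -⟩ := h
  have hdx := hdeg x
  have hdy := hdeg y
  have hw : (c₁ : K) * G.deg x < G.w x y := (lt_div_iff₀ hdx).1 hlt
  have hwd : G.w x y ≤ G.deg y := by rw [G.symm]; exact w_le_deg G y x
  refine ⟨1 / c₁, by positivity, ?_⟩
  rw [div_lt_iff₀ hdy]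
  have hc₁K : (0:K) < (c₁ : ℚ) := by exact_mod_cast hc₁
  have h2 : (c₁ : K) * G.deg x < G.deg y := hw.trans_le hwd
  rw [show ((1 / c₁ : ℚ) : K) = 1 / (c₁ : K) by push_cast; ring,
    one_div, ← div_eq_inv_mul, lt_div_iff₀ hc₁K]
  nlinarith

/-- for `x, y ∈ U`, `x → y` w.r.t. `π_U^b` iff there is a path
`x = x₀ ∼ ⋯ ∼ xₙ = y` in `U` with `b(xᵢ, xᵢ₊₁) ≃ b(xᵢ)`; in this case
`b(xᵢ₊₁) ≿ b(xᵢ)` for all `i` and `b(y) ≿ b(x)`. -/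
theorem reaches_iff_path {V K : Type*} [Field K] [LinearOrder K] [IsStrictOrderedRing K] [Countable V]
    (G : Graph V K) (hconn : G.Connected) (hdeg : ∀ x, 0 < G.deg x)
    (U : Set V) (x y : V) (hx : x ∈ U) (hy : y ∈ U) :
    (Reaches (G.pi U) x y ↔
      ∃ (n : ℕ) (p : ℕ → V), p 0 = x ∧ p n = y ∧ (∀ i ≤ n, p i ∈ U) ∧
        ∀ i < n, Comparable (G.w (p i) (p (i + 1))) (G.deg (p i))) ∧
    (∀ (n : ℕ) (p : ℕ → V), p 0 = x → p n = y → (∀ i ≤ n, p i ∈ U) →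
      (∀ i < n, Comparable (G.w (p i) (p (i + 1))) (G.deg (p i))) →
      (∀ i < n, LessSim (G.deg (p i)) (G.deg (p (i + 1)))) ∧
        LessSim (G.deg x) (G.deg y)) := by
  constructor
  · constructor
    · intro h
      rcases h with rfl | ⟨n, p, hp0, hpn, hstep⟩
      · exact ⟨0, fun _ => x, rfl, rfl, fun i _ => hx, fun i hi => absurd hi (Nat.not_lt_zero i)⟩
      · have hU : ∀ j ≤ n, p (n - j) ∈ U := by
          intro j
          induction j with
          | zero => intro _; simpa [Nat.sub_zero, hpn] using hy
          | succ j ih =>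
            intro hj
            by_contra hnotU
            have hi : n - (j + 1) < n := by omega
            have hpos := hstep _ hi
            rw [Graph.pi, if_neg hnotU] at hpos
            by_cases heq : p (n - (j + 1)) = p (n - (j + 1) + 1)
            · have h1 : n - (j + 1) + 1 = n - j := by omega
              exact hnotU (by rw [heq, h1]; exact ih (by omega))
            · rw [if_neg heq] at hpos; exact lt_irrefl _ hpos
        have hU' : ∀ i ≤ n, p i ∈ U := by
          intro i hi
          have := hU (n - i) (by omega)
          rwa [show n - (n - i) = i by omega] at this
        exact ⟨n, p, hp0, hpn, hU', fun i hi =>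
          (comparable_iff_pi_pos G hdeg U _ (hU' i hi.le)).1 (hstep i hi)⟩
    · rintro ⟨n, p, hp0, hpn, hU, hcomp⟩
      rcases Nat.eq_zero_or_pos n with rfl | hn
      · left; rw [← hp0, hpn]
      · exact Or.inr ⟨n, p, hp0, hpn, fun i hi =>
          (comparable_iff_pi_pos G hdeg U _ (hU i hi.le)).2 (hcomp i hi)⟩
  · intro n p hp0 hpn hU hcomp
    have hstep : ∀ i < n, LessSim (G.deg (p i)) (G.deg (p (i + 1))) :=
      fun i hi => step_lessSim G hdeg (hcomp i hi)
    refine ⟨hstep, ?_⟩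
    have key : ∀ i ≤ n, LessSim (G.deg x) (G.deg (p i)) := by
      intro i
      induction i with
      | zero => intro _; rw [hp0]; exact lessSim_of_le le_rfl (hdeg x)
      | succ i ih =>
        intro hi
        exact lessSim_trans (hdeg (p i)) (hdeg (p (i + 1))) (ih (by omega)) (hstep i (by omega))
    have := key n le_rfl
    rwa [hpn] at this

end NAG
end

section
/- Let b be a connected locally finite weighted graph over V with values in an ordered field, K ⊆ L ⊆ V finite connected sets, and a ∈ K. Then cap_L(a)/b(a) ⪯ cap_K(a)/b(a) ⪯ 1, and hence the reciprocals of the real parts satisfy 1/ρ(cap_L(a)/b(a)) ≥ 1/ρ(cap_K(a)/b(a)) ≥ 1. -/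
open Classical
open scoped ENNReal

namespace NAG

variable {V K : Type*} [Field K] [LinearOrder K] [IsStrictOrderedRing K]

/-- The Laplacian `Δf(x) = (1/b(x)) Σ_y b(x,y)(f(x) − f(y))`. -/
noncomputable def Graph.lap (G : Graph V K) (f : V → K) (x : V) : K :=
  (∑ᶠ y, G.w x y * (f x - f y)) / G.deg x

/-- `v` solves the Dirichlet problem for the finite set `S` and `a ∈ S`. -/
def Graph.IsDirichletSol (G : Graph V K) (S : Finset V) (a : V) (v : V → K) : Prop :=
  v a = 1 ∧ (∀ x ∈ S, x ≠ a → G.lap v x = 0) ∧ ∀ x ∉ S, v x = 0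

lemma Graph.num_eq_sum (G : Graph V K) (v : V → K) (x : V) :
    (∑ᶠ y, G.w x y * (v x - v y)) =
      ∑ y ∈ (G.locFin x).toFinset, G.w x y * (v x - v y) := by
  apply finsum_eq_finset_sum_of_support_subset
  intro y hy
  simp only [Function.mem_support] at hy
  simp only [Set.Finite.coe_toFinset, Set.mem_setOf_eq]
  intro h
  apply hy
  rw [h, zero_mul]

lemma Graph.deg_eq_sum (G : Graph V K) (x : V) :
    G.deg x = ∑ y ∈ (G.locFin x).toFinset, G.w x y := by
  apply finsum_eq_finset_sum_of_support_subset
  intro y hy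
  simpa using hy

/-- If `u` attains its global minimum at `x` and the Laplacian numerator at `x` is
nonnegative, then all neighbours of `x` also attain the minimum. -/
lemma key_neighbors (G : Graph V K) (u : V → K) (m : K)
    (hm : ∀ y, m ≤ u y) (x : V) (hx : u x = m)
    (hN : 0 ≤ ∑ᶠ y, G.w x y * (u x - u y)) :
    ∀ y, 0 < G.w x y → u y = m := by
  rw [G.num_eq_sum] at hN
  have hterm : ∀ y ∈ (G.locFin x).toFinset, G.w x y * (u x - u y) ≤ 0 := by
    intro y _
    apply mul_nonpos_of_nonneg_of_nonpos (G.nonneg x y)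
    rw [hx]
    linarith [hm y]
  have hsum0 : (∑ y ∈ (G.locFin x).toFinset, G.w x y * (u x - u y)) = 0 :=
    le_antisymm (Finset.sum_nonpos hterm) hN
  have hzero : ∀ y ∈ (G.locFin x).toFinset, G.w x y * (u x - u y) = 0 := by
    intro y hy
    by_contra h
    have hlt : G.w x y * (u x - u y) < 0 := lt_of_le_of_ne (hterm y hy) h
    have : (∑ y ∈ (G.locFin x).toFinset, G.w x y * (u x - u y)) < 0 :=
      Finset.sum_neg' hterm ⟨y, hy, hlt⟩
    linarith [this.trans_eq hsum0.symm]
  intro y hy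
  have hymem : y ∈ (G.locFin x).toFinset := by
    simp only [Set.Finite.mem_toFinset, Set.mem_setOf_eq]
    exact ne_of_gt hy
  have := hzero y hymem
  rcases mul_eq_zero.mp this with h | h
  · exact absurd h (ne_of_gt hy)
  · rw [hx] at h
    linarith

/-- Minimum principle: a function that is nonnegative outside `S` and at `a`,
and has nonnegative Laplacian numerator on `S \ {a}`, is nonnegative everywhere. -/
lemma minPrinciple (G : Graph V K)
    (S : Finset V) (hcS : G.ConnectedOn ↑S) (a : V) (haS : a ∈ S)
    (u : V → K) (hout : ∀ x ∉ S, 0 ≤ u x) (hua : 0 ≤ u a)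
    (hsub : ∀ x ∈ S, x ≠ a → 0 ≤ ∑ᶠ y, G.w x y * (u x - u y)) :
    ∀ x, 0 ≤ u x := by
  set m := (insert (0:K) (S.image u)).min' (by simp) with hmdef
  have hm0 : m ≤ 0 := Finset.min'_le _ _ (Finset.mem_insert_self _ _)
  have hmle : ∀ y, m ≤ u y := by
    intro y
    by_cases hy : y ∈ S
    · exact Finset.min'_le _ _ (Finset.mem_insert_of_mem (Finset.mem_image_of_mem u hy))
    · exact hm0.trans (hout y hy)
  have hkey : 0 ≤ m := by
    by_contra hneg
    push_neg at hneg
    have hmmem := Finset.min'_mem (insert (0:K) (S.image u)) (by simp)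
    rw [← hmdef] at hmmem
    rcases Finset.mem_insert.mp hmmem with h | h
    · exact absurd h (ne_of_lt hneg)
    · obtain ⟨x, hxS, hxm⟩ := Finset.mem_image.mp h
      obtain ⟨n, p, hp0, hpn, hpS, hadj⟩ := hcS x hxS a haS
      have claim : ∀ i, i ≤ n → u (p i) = m := by
        intro i
        induction i with
        | zero => intro _; rw [hp0]; exact hxm
        | succ j ih =>
          intro hj
          have hjn : j < n := Nat.lt_of_succ_le hj
          have huj : u (p j) = m := ih (le_of_lt hjn)
          have hpja : p j ≠ a := by
            intro h
            rw [← h, huj] at hua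
            exact absurd hua (not_le.mpr hneg)
          have hN := hsub (p j) (hpS j (le_of_lt hjn)) hpja
          exact key_neighbors G u m hmle (p j) huj hN (p (j+1)) (hadj j hjn)
      have := claim n le_rfl
      rw [hpn] at this
      rw [this] at hua
      exact absurd hua (not_le.mpr hneg)
  intro x
  exact le_trans hkey (hmle x)

lemma dirichlet_num_zero (G : Graph V K) (hdeg : ∀ x, 0 < G.deg x)
    {S : Finset V} {a : V} {v : V → K} (hv : G.IsDirichletSol S a v)
    {x : V} (hx : x ∈ S) (hxa : x ≠ a) :
    (∑ᶠ y, G.w x y * (v x - v y)) = 0 := by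
  have h := hv.2.1 x hx hxa
  unfold Graph.lap at h
  rcases div_eq_zero_iff.mp h with h | h
  · exact h
  · exact absurd h (ne_of_gt (hdeg x))

lemma dirichlet_nonneg (G : Graph V K) (hdeg : ∀ x, 0 < G.deg x)
    {S : Finset V} (hcS : G.ConnectedOn ↑S) {a : V} (haS : a ∈ S)
    {v : V → K} (hv : G.IsDirichletSol S a v) : ∀ x, 0 ≤ v x := by
  apply minPrinciple G S hcS a haS v
  · intro x hx; rw [hv.2.2 x hx]
  · rw [hv.1]; exact zero_le_one
  · intro x hx hxa
    rw [dirichlet_num_zero G hdeg hv hx hxa]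

lemma dirichlet_le_one (G : Graph V K) (hdeg : ∀ x, 0 < G.deg x)
    {S : Finset V} (hcS : G.ConnectedOn ↑S) {a : V} (haS : a ∈ S)
    {v : V → K} (hv : G.IsDirichletSol S a v) : ∀ x, v x ≤ 1 := by
  have h := minPrinciple G S hcS a haS (fun x => 1 - v x)
    (by intro x hx; simp [hv.2.2 x hx])
    (by simp [hv.1])
    (by
      intro x hx hxa
      have hz := dirichlet_num_zero G hdeg hv hx hxa
      have : (∑ᶠ y, G.w x y * ((1 - v x) - (1 - v y)))
          = ∑ᶠ y, -(G.w x y * (v x - v y)) := by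
        apply finsum_congr; intro y; ring
      rw [this, finsum_neg_distrib, hz, neg_zero])
  intro x
  have := h x
  simpa using this

lemma dirichlet_mono (G : Graph V K) (hdeg : ∀ x, 0 < G.deg x)
    {SK SL : Finset V} (hKL : SK ⊆ SL)
    (hcK : G.ConnectedOn ↑SK) (hcL : G.ConnectedOn ↑SL)
    {a : V} (ha : a ∈ SK)
    {vK vL : V → K} (hvK : G.IsDirichletSol SK a vK)
    (hvL : G.IsDirichletSol SL a vL) : ∀ x, vK x ≤ vL x := by
  have hKnn := dirichlet_nonneg G hdeg hcK ha hvK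
  have h := minPrinciple G SL hcL a (hKL ha) (fun x => vL x - vK x)
    (by
      intro x hx
      show 0 ≤ vL x - vK x
      rw [hvL.2.2 x hx, hvK.2.2 x (fun hc => hx (hKL hc))]
      simp)
    (by show 0 ≤ vL a - vK a; rw [hvL.1, hvK.1]; simp)
    (by
      intro x hx hxa
      have hsplit : (∑ᶠ y, G.w x y * ((vL x - vK x) - (vL y - vK y)))
          = (∑ᶠ y, G.w x y * (vL x - vL y)) - ∑ᶠ y, G.w x y * (vK x - vK y) := by
        rw [G.num_eq_sum vL, G.num_eq_sum vK,
          G.num_eq_sum (fun x => vL x - vK x), ← Finset.sum_sub_distrib]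
        apply Finset.sum_congr rfl
        intro y _; ring
      rw [hsplit, dirichlet_num_zero G hdeg hvL hx hxa, zero_sub]
      by_cases hxK : x ∈ SK
      · rw [dirichlet_num_zero G hdeg hvK hxK hxa, neg_zero]
      · have hvKx : vK x = 0 := hvK.2.2 x hxK
        rw [G.num_eq_sum vK]
        rw [neg_nonneg]
        apply Finset.sum_nonpos
        intro y _
        apply mul_nonpos_of_nonneg_of_nonpos (G.nonneg x y)
        rw [hvKx]
        linarith [hKnn y])
  intro x
  have := h x
  simpa using this

lemma rp_le_one {k : K} (hk : k ≤ 1) : rp k ≤ 1 := by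
  apply Real.sSup_le _ zero_le_one
  rintro r ⟨q, rfl, hq⟩
  have hqk : (q : K) ≤ 1 := hq.trans hk
  have hq1 : q ≤ 1 := by exact_mod_cast hqk
  exact_mod_cast hq1

lemma rp_mono {k₁ k₂ : K} (h0 : 0 ≤ k₁) (h : k₁ ≤ k₂) (h1 : k₂ ≤ 1) :
    rp k₁ ≤ rp k₂ := by
  apply csSup_le_csSup
  · refine ⟨1, ?_⟩
    rintro r ⟨q, rfl, hq⟩
    have hqk : (q : K) ≤ 1 := hq.trans h1
    have hq1 : q ≤ 1 := by exact_mod_cast hqk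
    exact_mod_cast hq1
  · exact ⟨0, 0, by norm_num, by exact_mod_cast h0⟩
  · rintro r ⟨q, rfl, hq⟩
    exact ⟨q, rfl, hq.trans h⟩

/-- for finite connected `K ⊆ L` and `a ∈ K`,
`cap_L(a)/b(a) ⪯ cap_K(a)/b(a) ⪯ 1` and
`1/ρ(cap_L(a)/b(a)) ≥ 1/ρ(cap_K(a)/b(a)) ≥ 1` (in `[0,∞]`). -/
theorem cap_monotone_and_G {V K : Type*} [Field K] [LinearOrder K] [IsStrictOrderedRing K] [Countable V]
    (G : Graph V K) (hconn : G.Connected) (hdeg : ∀ x, 0 < G.deg x)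
    (SK SL : Finset V) (hKL : SK ⊆ SL)
    (hcK : G.ConnectedOn ↑SK) (hcL : G.ConnectedOn ↑SL)
    (a : V) (ha : a ∈ SK)
    (vK vL : V → K)
    (hvK : G.IsDirichletSol SK a vK) (hvL : G.IsDirichletSol SL a vL) :
    (G.lap vL a * G.deg a) / G.deg a ≤ (G.lap vK a * G.deg a) / G.deg a ∧
    (G.lap vK a * G.deg a) / G.deg a ≤ 1 ∧
    (1 : ℝ≥0∞) ≤ (ENNReal.ofReal (rp ((G.lap vK a * G.deg a) / G.deg a)))⁻¹ ∧
    (ENNReal.ofReal (rp ((G.lap vK a * G.deg a) / G.deg a)))⁻¹ ≤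
      (ENNReal.ofReal (rp ((G.lap vL a * G.deg a) / G.deg a)))⁻¹ := by
  have hd : G.deg a ≠ 0 := ne_of_gt (hdeg a)
  have hcanc : ∀ v : V → K, (G.lap v a * G.deg a) / G.deg a = G.lap v a := by
    intro v; exact mul_div_cancel_right₀ _ hd
  rw [hcanc vK, hcanc vL]
  have haL : a ∈ SL := hKL ha
  have hKnn := dirichlet_nonneg G hdeg hcK ha hvK
  have hLnn := dirichlet_nonneg G hdeg hcL haL hvL
  have hLle1 := dirichlet_le_one G hdeg hcL haL hvL
  have hmono := dirichlet_mono G hdeg hKL hcK hcL ha hvK hvL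
  -- numerator comparisons
  have hnumLK : (∑ᶠ y, G.w a y * (vL a - vL y)) ≤ ∑ᶠ y, G.w a y * (vK a - vK y) := by
    rw [G.num_eq_sum vL, G.num_eq_sum vK]
    apply Finset.sum_le_sum
    intro y _
    apply mul_le_mul_of_nonneg_left _ (G.nonneg a y)
    rw [hvL.1, hvK.1]
    linarith [hmono y]
  have hnumK : (∑ᶠ y, G.w a y * (vK a - vK y)) ≤ G.deg a := by
    rw [G.num_eq_sum vK, G.deg_eq_sum]
    apply Finset.sum_le_sum
    intro y _
    have : vK a - vK y ≤ 1 := by rw [hvK.1]; linarith [hKnn y]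
    calc G.w a y * (vK a - vK y) ≤ G.w a y * 1 :=
          mul_le_mul_of_nonneg_left this (G.nonneg a y)
      _ = G.w a y := mul_one _
  have hnumL0 : 0 ≤ ∑ᶠ y, G.w a y * (vL a - vL y) := by
    rw [G.num_eq_sum vL]
    apply Finset.sum_nonneg
    intro y _
    apply mul_nonneg (G.nonneg a y)
    rw [hvL.1]
    linarith [hLle1 y]
  -- Laplacian comparisons
  have h1 : G.lap vL a ≤ G.lap vK a := by
    unfold Graph.lap
    exact (div_le_div_iff_of_pos_right (hdeg a)).mpr hnumLK
  have h2 : G.lap vK a ≤ 1 := by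
    unfold Graph.lap
    rw [div_le_one (hdeg a)]
    exact hnumK
  have h3 : 0 ≤ G.lap vL a := by
    unfold Graph.lap
    exact div_nonneg hnumL0 (le_of_lt (hdeg a))
  refine ⟨h1, h2, ?_, ?_⟩
  · have hrp : rp (G.lap vK a) ≤ 1 := rp_le_one h2
    have : ENNReal.ofReal (rp (G.lap vK a)) ≤ 1 := ENNReal.ofReal_le_one.mpr hrp
    have h' := ENNReal.inv_le_inv' this
    rwa [inv_one] at h'
  · apply ENNReal.inv_le_inv'
    apply ENNReal.ofReal_le_ofReal
    exact rp_mono h3 h1 h2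

end NAG
end

section
/- Let b be a connected locally finite weighted graph over V with values in an ordered field, K ⊆ V finite connected, and a ∈ K. Then G_K(a) := 1/ρ(cap_K(a)/b(a)) satisfies G_K(a) ≥ Σ_{n=0}^∞ π_K^{(n)}(a,a), where π_K = π_K^b is the real transition matrix and π_K^{(n)} its n-step entries. -/
open Classical
open scoped ENNReal

namespace NAG

variable {V K : Type*} [Field K] [LinearOrder K] [IsStrictOrderedRing K]

/-- `n`-step entries of a real kernel. -/
noncomputable def matpow {V : Type*} (m : V → V → ℝ) : ℕ → V → V → ℝ
  | 0 => fun x y => if x = y then 1 else 0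
  | n + 1 => fun x y => ∑ᶠ z, matpow m n x z * m z y


section RPLemmas
variable {F : Type*} [Field F] [LinearOrder F] [IsStrictOrderedRing F]

lemma rp_mem {k : F} {q : ℚ} (h : (q : F) ≤ k) :
    (q : ℝ) ∈ {r : ℝ | ∃ q : ℚ, r = (q : ℝ) ∧ (q : F) ≤ k} := ⟨q, rfl, h⟩

lemma rp_bddAbove {k : F} {qb : ℚ} (h : k ≤ (qb : F)) :
    BddAbove {r : ℝ | ∃ q : ℚ, r = (q : ℝ) ∧ (q : F) ≤ k} := by
  refine ⟨(qb : ℝ), ?_⟩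
  rintro r ⟨q, rfl, hq⟩
  have h2 : (q : F) ≤ (qb : F) := hq.trans h
  have : q ≤ qb := by exact_mod_cast h2
  exact_mod_cast this

lemma rp_nonneg {k : F} (hk : 0 ≤ k) : 0 ≤ rp k := by
  by_cases hb : BddAbove {r : ℝ | ∃ q : ℚ, r = (q : ℝ) ∧ (q : F) ≤ k}
  · have h0 := le_csSup hb (rp_mem (k := k) (q := 0) (by simpa using hk))
    simpa [rp] using h0
  · unfold rp; rw [Real.sSup_of_not_bddAbove hb]

lemma rp_le {k : F} {r : ℝ} (hk : 0 ≤ k) (hr : ∀ q : ℚ, (q : F) ≤ k → (q : ℝ) ≤ r) :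
    rp k ≤ r := by
  apply csSup_le ⟨((0 : ℚ) : ℝ), rp_mem (by simpa using hk)⟩
  rintro x ⟨q, rfl, hq⟩; exact hr q hq

lemma le_rp {k : F} {q qb : ℚ} (hq : (q : F) ≤ k) (hk : k ≤ (qb : F)) : (q : ℝ) ≤ rp k :=
  le_csSup (rp_bddAbove hk) (rp_mem hq)

lemma rp_zero : rp (0 : F) = 0 := by
  refine le_antisymm (rp_le le_rfl fun q hq => ?_) (rp_nonneg le_rfl)
  have : q ≤ 0 := by exact_mod_cast hq
  exact_mod_cast this

lemma rp_one_le : rp (1 : F) ≤ 1 := by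
  refine rp_le zero_le_one fun q hq => ?_
  have : q ≤ 1 := by exact_mod_cast hq
  exact_mod_cast this

lemma one_le_rp_one : (1 : ℝ) ≤ rp (1 : F) := by
  have := le_rp (k := (1:F)) (q := 1) (qb := 1) (by norm_num) (by norm_num)
  simpa using this

lemma rp_pos_elim {k : F} (h : 0 < rp k) : ∃ q : ℚ, 0 < q ∧ (q : F) ≤ k := by
  by_contra hc
  push_neg at hc
  have hle : rp k ≤ 0 := by
    by_cases hne : {r : ℝ | ∃ q : ℚ, r = (q : ℝ) ∧ (q : F) ≤ k}.Nonempty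
    · apply csSup_le hne
      rintro x ⟨q, rfl, hq⟩
      have hq0 : q ≤ 0 := not_lt.mp (fun hpos => (hc q hpos).not_ge hq)
      exact_mod_cast hq0
    · unfold rp; rw [Set.not_nonempty_iff_eq_empty.mp hne, Real.sSup_empty]
  linarith

def Fin0 (k : F) : Prop := 0 ≤ k ∧ ∃ q : ℚ, k ≤ (q : F)

lemma Fin0.of_le_one {k : F} (h0 : 0 ≤ k) (h1 : k ≤ 1) : Fin0 k :=
  ⟨h0, 1, by exact_mod_cast h1⟩

lemma Fin0.mul {x y : F} (hx : Fin0 x) (hy : Fin0 y) : Fin0 (x * y) := by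
  obtain ⟨hx0, qx, hqx⟩ := hx; obtain ⟨hy0, qy, hqy⟩ := hy
  exact ⟨mul_nonneg hx0 hy0, qx * qy, by push_cast; exact mul_le_mul hqx hqy hy0 (hx0.trans hqx)⟩

lemma Fin0.add {x y : F} (hx : Fin0 x) (hy : Fin0 y) : Fin0 (x + y) := by
  obtain ⟨hx0, qx, hqx⟩ := hx; obtain ⟨hy0, qy, hqy⟩ := hy
  exact ⟨add_nonneg hx0 hy0, qx + qy, by push_cast; exact add_le_add hqx hqy⟩

lemma rp_mono_s17 {x y : F} (hx : 0 ≤ x) (hxy : x ≤ y) {q : ℚ} (hy : y ≤ (q : F)) :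
    rp x ≤ rp y :=
  rp_le hx fun q' hq' => le_rp (hq'.trans hxy) hy

lemma rp_add_le {x y : F} (hx : Fin0 x) (hy : Fin0 y) : rp x + rp y ≤ rp (x + y) := by
  obtain ⟨hx0, qx, hqx⟩ := hx
  obtain ⟨hy0, qy, hqy⟩ := hy
  have hbd : x + y ≤ ((qx + qy : ℚ) : F) := by push_cast; exact add_le_add hqx hqy
  have h1 : ∀ q1 : ℚ, (q1 : F) ≤ x → (q1 : ℝ) + rp y ≤ rp (x + y) := by
    intro q1 hq1
    have h2 : rp y ≤ rp (x + y) - (q1 : ℝ) := by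
      apply rp_le hy0
      intro q2 hq2
      have h3 : ((q1 + q2 : ℚ) : F) ≤ x + y := by push_cast; exact add_le_add hq1 hq2
      have h4 := le_rp h3 hbd
      push_cast at h4
      linarith
    linarith
  have h5 : rp x ≤ rp (x + y) - rp y := rp_le hx0 fun q1 hq1 => by linarith [h1 q1 hq1]
  linarith

lemma rp_mul_le {x y : F} (hx : Fin0 x) (hy : Fin0 y) : rp x * rp y ≤ rp (x * y) := by
  obtain ⟨hx0, qx, hqx⟩ := hx
  obtain ⟨hy0, qy, hqy⟩ := hy
  have hxy0 : 0 ≤ x * y := mul_nonneg hx0 hy0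
  have hbd : x * y ≤ ((qx * qy : ℚ) : F) := by
    push_cast; exact mul_le_mul hqx hqy hy0 (hx0.trans hqx)
  rcases le_or_gt (rp y) 0 with hy' | hy'
  · have h := mul_nonpos_of_nonneg_of_nonpos (rp_nonneg hx0) hy'
    exact h.trans (rp_nonneg hxy0)
  · have h1 : ∀ q1 : ℚ, 0 < q1 → (q1 : F) ≤ x → (q1 : ℝ) * rp y ≤ rp (x * y) := by
      intro q1 hq1pos hq1
      have hq1R : (0 : ℝ) < (q1 : ℝ) := by exact_mod_cast hq1pos
      have h2 : rp y ≤ rp (x * y) / (q1 : ℝ) := by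
        apply rp_le hy0
        intro q2 hq2
        rcases le_or_gt ((q2 : ℝ)) 0 with h | h
        · exact h.trans (div_nonneg (rp_nonneg hxy0) hq1R.le)
        · have hq2pos : (0 : F) < (q2 : F) := by exact_mod_cast (show (0:ℚ) < q2 by exact_mod_cast h)
          have h3 : ((q1 * q2 : ℚ) : F) ≤ x * y := by
            push_cast
            exact mul_le_mul hq1 hq2 hq2pos.le hx0
          have h4 := le_rp h3 hbd
          push_cast at h4
          rw [le_div_iff₀ hq1R]
          nlinarith [h4]
      calc (q1 : ℝ) * rp y ≤ (q1 : ℝ) * (rp (x * y) / (q1 : ℝ)) :=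
            mul_le_mul_of_nonneg_left h2 hq1R.le
        _ = rp (x * y) := by field_simp
    have h5 : rp x ≤ rp (x * y) / rp y := by
      apply rp_le hx0
      intro q1 hq1
      rcases le_or_gt ((q1 : ℝ)) 0 with h | h
      · exact h.trans (div_nonneg (rp_nonneg hxy0) hy'.le)
      · have hq1pos : 0 < q1 := by exact_mod_cast h
        rw [le_div_iff₀ hy']
        exact h1 q1 hq1pos hq1
    calc rp x * rp y ≤ (rp (x * y) / rp y) * rp y := mul_le_mul_of_nonneg_right h5 hy'.le
      _ = rp (x * y) := div_mul_cancel₀ _ (ne_of_gt hy')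

lemma fin0_sum {α : Type*} (s : Finset α) (t : α → F) :
    (∀ i ∈ s, Fin0 (t i)) → Fin0 (∑ i ∈ s, t i) := by
  classical
  induction s using Finset.induction_on with
  | empty => intro _; exact ⟨by simp, 0, by simp⟩
  | insert _ _ hx ih =>
    intro h
    rw [Finset.sum_insert hx]
    exact (h _ (Finset.mem_insert_self _ _)).add
      (ih fun i hi => h i (Finset.mem_insert_of_mem hi))

lemma rp_sum_le {α : Type*} (s : Finset α) (t : α → F) :
    (∀ i ∈ s, Fin0 (t i)) → ∑ i ∈ s, rp (t i) ≤ rp (∑ i ∈ s, t i) := by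
  classical
  induction s using Finset.induction_on with
  | empty => intro _; simp [rp_zero]
  | insert _ _ hx ih =>
    intro h
    rw [Finset.sum_insert hx, Finset.sum_insert hx]
    calc rp (t _) + ∑ i ∈ _, rp (t i) ≤ rp (t _) + rp (∑ i ∈ _, t i) :=
          add_le_add_right (ih fun i hi => h i (Finset.mem_insert_of_mem hi)) _
      _ ≤ rp (t _ + ∑ i ∈ _, t i) :=
          rp_add_le (h _ (Finset.mem_insert_self _ _))
            (fin0_sum _ _ fun i hi => h i (Finset.mem_insert_of_mem hi))

end RPLemmas

section GraphAux
variable {V K : Type*} [Field K] [LinearOrder K] [IsStrictOrderedRing K]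

/-- killed kernel powers (row vector from `a`), in the field `K`. -/
noncomputable def hkAux (G : Graph V K) (S : Finset V) (a : V) : ℕ → V → K
  | 0 => fun z => if z = a then 1 else 0
  | n + 1 => fun z => ∑ w ∈ S, hkAux G S a n w * G.p w z

end GraphAux

/-- `G_K(a) = 1/ρ(cap_K(a)/b(a)) ≥ Σ_{n} π_K^{(n)}(a,a)` (in `[0,∞]`). -/
theorem GK_ge_green_sum {V K : Type*} [Field K] [LinearOrder K] [IsStrictOrderedRing K] [Countable V]
    (G : Graph V K) (hconn : G.Connected) (hdeg : ∀ x, 0 < G.deg x)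
    (S : Finset V) (hS : G.ConnectedOn ↑S) (a : V) (ha : a ∈ S)
    (v : V → K) (hv : G.IsDirichletSol S a v) :
    ∑' n : ℕ, ENNReal.ofReal (matpow (G.pi ↑S) n a a) ≤
      (ENNReal.ofReal (rp ((G.lap v a * G.deg a) / G.deg a)))⁻¹ := by
  classical
  obtain ⟨hva, hharm, hout⟩ := hv
  set c : K := G.lap v a with hc_def
  have hdegne : ∀ x, G.deg x ≠ 0 := fun x => ne_of_gt (hdeg x)
  have hexpr : c * G.deg a / G.deg a = c := mul_div_cancel_right₀ c (hdegne a)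
  rw [hexpr]
  have hNt : ∀ x y : V, y ∈ (G.locFin x).toFinset ↔ G.w x y ≠ 0 := fun x y =>
    Set.Finite.mem_toFinset _
  have hdeg_sum : ∀ x, G.deg x = ∑ y ∈ (G.locFin x).toFinset, G.w x y := fun x =>
    finsum_eq_sum_of_support_subset _ (fun y hy =>
      Finset.mem_coe.mpr ((hNt x y).mpr (by simpa [Function.mem_support] using hy)))
  have hlapnum : ∀ (f : V → K) (x : V),
      G.lap f x * G.deg x = ∑ y ∈ (G.locFin x).toFinset, G.w x y * (f x - f y) := by
    intro f x
    have hsup : (∑ᶠ y, G.w x y * (f x - f y)) =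
        ∑ y ∈ (G.locFin x).toFinset, G.w x y * (f x - f y) := by
      apply finsum_eq_sum_of_support_subset
      intro y hy
      refine Finset.mem_coe.mpr ((hNt x y).mpr fun h0 => ?_)
      simp [Function.mem_support, h0] at hy
    simp only [Graph.lap]
    rw [div_mul_cancel₀ _ (hdegne x), hsup]
  have hp_nonneg : ∀ x y, 0 ≤ G.p x y := fun x y => div_nonneg (G.nonneg x y) (hdeg x).le
  have hw_le_deg : ∀ x y, G.w x y ≤ G.deg x := by
    intro x y
    by_cases h : G.w x y = 0
    · rw [h]; exact (hdeg x).le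
    · rw [hdeg_sum x]
      exact Finset.single_le_sum (fun i _ => G.nonneg x i) ((hNt x y).mpr h)
  have hp_le_one : ∀ x y, G.p x y ≤ 1 := fun x y =>
    (div_le_one (hdeg x)).mpr (hw_le_deg x y)
  rcases le_or_gt (rp c) 0 with hrc | hrc
  · rw [ENNReal.ofReal_of_nonpos hrc, ENNReal.inv_zero]; exact le_top
  obtain ⟨q₀, hq₀, hq₀c⟩ := rp_pos_elim hrc
  have hcpos : 0 < c := lt_of_lt_of_le (by exact_mod_cast hq₀ : (0:K) < (q₀:K)) hq₀c
  have hcne : c ≠ 0 := ne_of_gt hcpos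
  -- v is nonnegative everywhere (minimum principle)
  have hv_nonneg : ∀ x, 0 ≤ v x := by
    by_contra hneg
    push_neg at hneg
    obtain ⟨x₁, hx₁⟩ := hneg
    have hx₁S : x₁ ∈ S := by
      by_contra h
      rw [hout x₁ h] at hx₁
      exact absurd hx₁ (lt_irrefl 0)
    obtain ⟨x₀, hx₀S, hmin⟩ := S.exists_min_image v ⟨a, ha⟩
    have hx₀neg : v x₀ < 0 := lt_of_le_of_lt (hmin x₁ hx₁S) hx₁
    have hlow : ∀ y, v x₀ ≤ v y := by
      intro y
      by_cases hy : y ∈ S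
      · exact hmin y hy
      · rw [hout y hy]; exact hx₀neg.le
    have hstep : ∀ x, x ∈ S → v x = v x₀ → ∀ y, 0 < G.w x y → v y = v x₀ := by
      intro x hxS hvx y hwy
      have hxa : x ≠ a := by
        intro h; rw [h, hva] at hvx
        rw [← hvx] at hx₀neg; linarith
      have h0 : G.lap v x = 0 := hharm x hxS hxa
      have hsum0 : ∑ z ∈ (G.locFin x).toFinset, G.w x z * (v x - v z) = 0 := by
        rw [← hlapnum v x, h0, zero_mul]
      have hterm : ∀ z ∈ (G.locFin x).toFinset, G.w x z * (v x - v z) ≤ 0 := by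
        intro z _
        apply mul_nonpos_of_nonneg_of_nonpos (G.nonneg x z)
        rw [hvx]; linarith [hlow z]
      have hz := (Finset.sum_eq_zero_iff_of_nonpos hterm).mp hsum0 y ((hNt x y).mpr (ne_of_gt hwy))
      rcases mul_eq_zero.mp hz with h | h
      · exact absurd h (ne_of_gt hwy)
      · have hxy : v y = v x := by linarith
        rw [hxy, hvx]
    obtain ⟨n, p, hp0, hpn, hpS, hadj⟩ :=
      hS x₀ (Finset.mem_coe.mpr hx₀S) a (Finset.mem_coe.mpr ha)
    have hall : ∀ i, i ≤ n → v (p i) = v x₀ := by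
      intro i
      induction i with
      | zero => intro _; rw [hp0]
      | succ k ih =>
        intro hk
        have hklt : k < n := Nat.lt_of_succ_le hk
        exact hstep (p k) (Finset.mem_coe.mp (hpS k (le_of_lt hklt))) (ih (le_of_lt hklt))
          (p (k + 1)) (hadj k hklt)
    have hva' : v a = v x₀ := by rw [← hpn]; exact hall n le_rfl
    rw [hva] at hva'; linarith
  -- c ≤ 1
  have hc_le_one : c ≤ 1 := by
    have h1 : c * G.deg a = ∑ y ∈ (G.locFin a).toFinset, G.w a y * (v a - v y) := hlapnum v a
    have h2 : ∑ y ∈ (G.locFin a).toFinset, G.w a y * (v a - v y) ≤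
        ∑ y ∈ (G.locFin a).toFinset, G.w a y := by
      apply Finset.sum_le_sum
      intro y _
      rw [hva]
      calc G.w a y * (1 - v y) ≤ G.w a y * 1 :=
            mul_le_mul_of_nonneg_left (by linarith [hv_nonneg y]) (G.nonneg a y)
        _ = G.w a y := mul_one _
    rw [← hdeg_sum a] at h2
    have h3 : c * G.deg a ≤ 1 * G.deg a := by rw [one_mul, h1]; exact h2
    exact le_of_mul_le_mul_right h3 (hdeg a)
  -- the supersolution g
  set g : V → K := fun z => v z * G.deg z / (c * G.deg a) with hgdef
  have hg_nonneg : ∀ z, 0 ≤ g z := fun z =>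
    div_nonneg (mul_nonneg (hv_nonneg z) (hdeg z).le) (mul_nonneg hcpos.le (hdeg a).le)
  have hga : g a = 1 / c := by
    rw [hgdef]
    show v a * G.deg a / (c * G.deg a) = 1 / c
    rw [hva, one_mul, mul_comm c (G.deg a), ← div_div, div_self (hdegne a)]
  have hkey : ∀ z ∈ S, ∑ w ∈ S, v w * G.w z w = v z * G.deg z - G.lap v z * G.deg z := by
    intro z _
    have hswap : ∑ w ∈ S, v w * G.w z w = ∑ y ∈ (G.locFin z).toFinset, G.w z y * v y := by
      have e1 : ∑ w ∈ S, v w * G.w z w =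
          ∑ w ∈ S ∪ (G.locFin z).toFinset, v w * G.w z w :=
        Finset.sum_subset Finset.subset_union_left
          (fun x _ hxS => by rw [hout x hxS, zero_mul])
      have e2 : ∑ w ∈ (G.locFin z).toFinset, v w * G.w z w =
          ∑ w ∈ S ∪ (G.locFin z).toFinset, v w * G.w z w :=
        Finset.sum_subset Finset.subset_union_right
          (fun x _ hxN => by
            rw [not_not.mp (fun h => hxN ((hNt z x).mpr h)), mul_zero])
      rw [e1, ← e2]
      exact Finset.sum_congr rfl fun y _ => mul_comm _ _
    have hexp : ∑ y ∈ (G.locFin z).toFinset, G.w z y * (v z - v y) =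
        v z * G.deg z - ∑ y ∈ (G.locFin z).toFinset, G.w z y * v y := by
      simp only [mul_sub]
      rw [Finset.sum_sub_distrib, ← Finset.sum_mul, ← hdeg_sum z, mul_comm]
    have hln := hlapnum v z
    rw [hexp] at hln
    rw [hswap]
    linarith
  have lemE : ∀ z ∈ S, (if z = a then (1:K) else 0) + ∑ w ∈ S, g w * G.p w z = g z := by
    intro z hz
    have hterm : ∀ w ∈ S, g w * G.p w z = v w * G.w z w / (c * G.deg a) := by
      intro w _
      rw [hgdef]
      show v w * G.deg w / (c * G.deg a) * (G.w w z / G.deg w) = _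
      rw [G.symm w z]
      field_simp [hcne, hdegne]
    rw [Finset.sum_congr rfl hterm, ← Finset.sum_div, hkey z hz]
    by_cases hza : z = a
    · subst hza
      rw [if_pos rfl, ← hc_def, hga, hva]
      field_simp [hcne, hdegne]
      ring
    · rw [if_neg hza, hharm z hz hza, zero_mul, sub_zero, zero_add, hgdef]
  -- partial sums of hk dominated by g on S
  have claim2 : ∀ N, ∀ z ∈ S,
      ∑ n ∈ Finset.range (N + 1), hkAux G S a n z ≤ g z := by
    intro N
    induction N with
    | zero =>
      intro z hz
      rw [Finset.sum_range_one]
      simp only [hkAux]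
      by_cases hza : z = a
      · subst hza
        rw [if_pos rfl, hga, le_div_iff₀ hcpos, one_mul]
        exact hc_le_one
      · rw [if_neg hza]; exact hg_nonneg z
    | succ N ih =>
      intro z hz
      rw [Finset.sum_range_succ']
      have hrw : ∑ n ∈ Finset.range (N + 1), hkAux G S a (n + 1) z =
          ∑ w ∈ S, (∑ n ∈ Finset.range (N + 1), hkAux G S a n w) * G.p w z := by
        simp only [hkAux]
        rw [Finset.sum_comm]
        exact Finset.sum_congr rfl fun w _ => by rw [Finset.sum_mul]
      rw [hrw]
      have hle : ∑ w ∈ S, (∑ n ∈ Finset.range (N + 1), hkAux G S a n w) * G.p w z ≤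
          ∑ w ∈ S, g w * G.p w z :=
        Finset.sum_le_sum fun w hw =>
          mul_le_mul_of_nonneg_right (ih w hw) (hp_nonneg w z)
      calc ∑ w ∈ S, (∑ n ∈ Finset.range (N+1), hkAux G S a n w) * G.p w z + hkAux G S a 0 z
          ≤ ∑ w ∈ S, g w * G.p w z + hkAux G S a 0 z := add_le_add_left hle _
        _ = (if z = a then (1:K) else 0) + ∑ w ∈ S, g w * G.p w z := by
            simp only [hkAux]; ring
        _ = g z := lemE z hz
  -- the enlarged finite set T
  set T : Finset V := S ∪ S.biUnion (fun x => (G.locFin x).toFinset) with hT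
  have hST : S ⊆ T := Finset.subset_union_left
  have hTnb : ∀ w ∈ S, ∀ z, G.w w z ≠ 0 → z ∈ T := fun w hw z hz =>
    Finset.mem_union_right _ (Finset.mem_biUnion.mpr ⟨w, hw, (hNt w z).mpr hz⟩)
  have hk_nonneg : ∀ n z, 0 ≤ hkAux G S a n z := by
    intro n
    induction n with
    | zero => intro z; simp only [hkAux]; split_ifs <;> norm_num
    | succ n ih =>
      intro z
      simp only [hkAux]
      exact Finset.sum_nonneg fun w _ => mul_nonneg (ih w) (hp_nonneg w z)
  have hsum_pT : ∀ w : V, ∑ z ∈ T, G.p w z ≤ 1 := by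
    intro w
    have hww : ∑ z ∈ T, G.w w z ≤ G.deg w := by
      calc ∑ z ∈ T, G.w w z ≤ ∑ z ∈ T ∪ (G.locFin w).toFinset, G.w w z :=
            Finset.sum_le_sum_of_subset_of_nonneg Finset.subset_union_left
              (fun i _ _ => G.nonneg w i)
        _ = ∑ z ∈ (G.locFin w).toFinset, G.w w z :=
            (Finset.sum_subset Finset.subset_union_right
              (fun x _ hx => not_not.mp (fun h => hx ((hNt w x).mpr h)))).symm
        _ = G.deg w := (hdeg_sum w).symm
    have hps : ∑ z ∈ T, G.p w z = (∑ z ∈ T, G.w w z) / G.deg w := by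
      simp only [Graph.p]
      rw [← Finset.sum_div]
    rw [hps]
    exact (div_le_one (hdeg w)).mpr hww
  have hk_mass : ∀ n, ∑ z ∈ T, hkAux G S a n z ≤ 1 := by
    intro n
    induction n with
    | zero =>
      simp only [hkAux]
      rw [Finset.sum_ite_eq' T a (fun _ => (1:K)), if_pos (hST ha)]
    | succ n ih =>
      simp only [hkAux]
      rw [Finset.sum_comm]
      calc ∑ w ∈ S, ∑ z ∈ T, hkAux G S a n w * G.p w z
          = ∑ w ∈ S, hkAux G S a n w * ∑ z ∈ T, G.p w z :=
            Finset.sum_congr rfl fun w _ => by rw [Finset.mul_sum]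
        _ ≤ ∑ w ∈ S, hkAux G S a n w * 1 :=
            Finset.sum_le_sum fun w _ =>
              mul_le_mul_of_nonneg_left (hsum_pT w) (hk_nonneg n w)
        _ = ∑ w ∈ S, hkAux G S a n w := by simp
        _ ≤ ∑ w ∈ T, hkAux G S a n w :=
            Finset.sum_le_sum_of_subset_of_nonneg hST (fun i _ _ => hk_nonneg n i)
        _ ≤ 1 := ih
  have hk_supp : ∀ n z, z ∉ T → hkAux G S a n z = 0 := by
    intro n z hzT
    cases n with
    | zero =>
      simp only [hkAux]
      rw [if_neg (fun h : z = a => hzT (by rw [h]; exact hST ha))]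
    | succ n =>
      simp only [hkAux]
      apply Finset.sum_eq_zero
      intro w hw
      have hwz : G.w w z = 0 := not_not.mp (fun h => hzT (hTnb w hw z h))
      have hp0 : G.p w z = 0 := by simp [Graph.p, hwz]
      rw [hp0, mul_zero]
  have hk_le_one : ∀ n z, hkAux G S a n z ≤ 1 := by
    intro n z
    by_cases hzT : z ∈ T
    · exact le_trans (Finset.single_le_sum (fun i _ => hk_nonneg n i) hzT) (hk_mass n)
    · rw [hk_supp n z hzT]; norm_num
  -- pi facts
  have hpi_nonneg : ∀ x y, 0 ≤ G.pi ↑S x y := by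
    intro x y
    simp only [Graph.pi]
    split_ifs
    · exact rp_nonneg (hp_nonneg x y)
    · exact zero_le_one
    · exact le_rfl
  have hpiS : ∀ x ∈ S, ∀ y, G.pi ↑S x y = rp (G.p x y) := by
    intro x hx y
    simp only [Graph.pi]
    rw [if_pos (Finset.mem_coe.mpr hx)]
  have hpiO : ∀ x, x ∉ S → ∀ y, G.pi ↑S x y = if x = y then 1 else 0 := by
    intro x hx y
    simp only [Graph.pi]
    rw [if_neg (fun h => hx (Finset.mem_coe.mp h))]
  -- matpow support, row formula, nonnegativity
  have hm_supp : ∀ n z, z ∉ T → matpow (G.pi ↑S) n a z = 0 := by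
    intro n
    induction n with
    | zero =>
      intro z hzT
      simp only [matpow]
      rw [if_neg (fun h : a = z => hzT (by rw [← h]; exact hST ha))]
    | succ n ih =>
      intro z hzT
      simp only [matpow]
      apply finsum_eq_zero_of_forall_eq_zero
      intro w
      by_cases hwS : w ∈ S
      · have hwz : G.w w z = 0 := not_not.mp (fun h => hzT (hTnb w hwS z h))
        have hp0 : G.p w z = 0 := by simp [Graph.p, hwz]
        rw [hpiS w hwS z, hp0, rp_zero, mul_zero]
      · rw [hpiO w hwS z]
        by_cases hwzeq : w = z
        · subst hwzeq
          rw [ih w hzT, zero_mul]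
        · rw [if_neg hwzeq, mul_zero]
  have hm_row : ∀ n z, matpow (G.pi ↑S) (n + 1) a z =
      ∑ w ∈ T, matpow (G.pi ↑S) n a w * G.pi ↑S w z := by
    intro n z
    simp only [matpow]
    apply finsum_eq_sum_of_support_subset
    intro w hw
    simp only [Function.mem_support] at hw
    refine Finset.mem_coe.mpr ?_
    by_contra hwT
    exact hw (by rw [hm_supp n w hwT, zero_mul])
  have hm_nonneg : ∀ n x, 0 ≤ matpow (G.pi ↑S) n a x := by
    intro n
    induction n with
    | zero => intro x; simp only [matpow]; split_ifs <;> norm_num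
    | succ n ih =>
      intro x
      simp only [matpow]
      exact finsum_nonneg fun w => mul_nonneg (ih w) (hpi_nonneg w x)
  have hfin0_hk : ∀ n w, Fin0 (hkAux G S a n w) := fun n w =>
    Fin0.of_le_one (hk_nonneg n w) (hk_le_one n w)
  have hfin0_p : ∀ w z, Fin0 (G.p w z) := fun w z =>
    Fin0.of_le_one (hp_nonneg w z) (hp_le_one w z)
  -- the main pointwise claim
  have claim : ∀ n, ∀ z ∈ S, matpow (G.pi ↑S) n a z ≤ rp (hkAux G S a n z) := by
    intro n
    induction n with
    | zero =>
      intro z hz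
      simp only [matpow, hkAux]
      by_cases hza : z = a
      · subst hza
        rw [if_pos rfl, if_pos rfl]
        exact one_le_rp_one
      · rw [if_neg (fun h : a = z => hza h.symm), if_neg hza]
        exact rp_nonneg le_rfl
    | succ n ih =>
      intro z hz
      rw [hm_row n z]
      have hTS : ∑ w ∈ T, matpow (G.pi ↑S) n a w * G.pi ↑S w z =
          ∑ w ∈ S, matpow (G.pi ↑S) n a w * G.pi ↑S w z :=
        (Finset.sum_subset hST (fun w _ hwS => by
          rw [hpiO w hwS z, if_neg (fun h : w = z => hwS (by rw [h]; exact hz)), mul_zero])).symm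
      rw [hTS]
      calc ∑ w ∈ S, matpow (G.pi ↑S) n a w * G.pi ↑S w z
          ≤ ∑ w ∈ S, rp (hkAux G S a n w) * rp (G.p w z) := by
            apply Finset.sum_le_sum
            intro w hw
            rw [hpiS w hw z]
            exact mul_le_mul_of_nonneg_right (ih w hw) (rp_nonneg (hp_nonneg w z))
        _ ≤ ∑ w ∈ S, rp (hkAux G S a n w * G.p w z) :=
            Finset.sum_le_sum fun w _ => rp_mul_le (hfin0_hk n w) (hfin0_p w z)
        _ ≤ rp (∑ w ∈ S, hkAux G S a n w * G.p w z) :=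
            rp_sum_le _ _ fun w _ => (hfin0_hk n w).mul (hfin0_p w z)
        _ = rp (hkAux G S a (n + 1) z) := by simp only [hkAux]
  -- final assembly
  rw [ENNReal.tsum_eq_iSup_sum]
  apply iSup_le
  intro Fs
  set N : ℕ := Fs.sup id with hN
  have hsub : Fs ⊆ Finset.range (N + 1) := fun i hi =>
    Finset.mem_range.mpr (Nat.lt_succ_of_le (Finset.le_sup (f := id) hi))
  have hPN : (∑ n ∈ Finset.range (N + 1), matpow (G.pi ↑S) n a a) ≤ (rp c)⁻¹ := by
    have hP : (∑ n ∈ Finset.range (N + 1), matpow (G.pi ↑S) n a a) ≤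
        rp (∑ n ∈ Finset.range (N + 1), hkAux G S a n a) :=
      calc ∑ n ∈ Finset.range (N + 1), matpow (G.pi ↑S) n a a
          ≤ ∑ n ∈ Finset.range (N + 1), rp (hkAux G S a n a) :=
            Finset.sum_le_sum fun n _ => claim n a ha
        _ ≤ rp (∑ n ∈ Finset.range (N + 1), hkAux G S a n a) :=
            rp_sum_le _ _ fun n _ => hfin0_hk n a
    set σ : K := ∑ n ∈ Finset.range (N + 1), hkAux G S a n a with hσ
    have hσ0 : 0 ≤ σ := Finset.sum_nonneg fun n _ => hk_nonneg n a
    have hσg : σ ≤ g a := claim2 N a ha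
    have hσc : σ * c ≤ 1 := by
      calc σ * c ≤ g a * c := mul_le_mul_of_nonneg_right hσg hcpos.le
        _ = 1 := by rw [hga]; field_simp
    have hq₀K : (0:K) < (q₀ : K) := by exact_mod_cast hq₀
    have hσbd : σ ≤ ((q₀⁻¹ : ℚ) : K) := by
      have h1 : σ * (q₀ : K) ≤ 1 :=
        le_trans (mul_le_mul_of_nonneg_left hq₀c hσ0) hσc
      have h2 : σ ≤ 1 / (q₀ : K) := (le_div_iff₀ hq₀K).mpr h1
      calc σ ≤ 1 / (q₀ : K) := h2
        _ = ((q₀⁻¹ : ℚ) : K) := by push_cast; rw [one_div]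
    have hrpσc : rp σ * rp c ≤ 1 :=
      calc rp σ * rp c ≤ rp (σ * c) :=
            rp_mul_le ⟨hσ0, q₀⁻¹, hσbd⟩ ⟨hcpos.le, 1, by exact_mod_cast hc_le_one⟩
        _ ≤ rp 1 := rp_mono_s17 (mul_nonneg hσ0 hcpos.le) hσc (q := 1) (by norm_num)
        _ ≤ 1 := rp_one_le
    have h6 : rp σ ≤ (rp c)⁻¹ := by
      rw [← one_div]
      exact (le_div_iff₀ hrc).mpr hrpσc
    exact hP.trans h6
  calc ∑ n ∈ Fs, ENNReal.ofReal (matpow (G.pi ↑S) n a a)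
      ≤ ∑ n ∈ Finset.range (N + 1), ENNReal.ofReal (matpow (G.pi ↑S) n a a) :=
        Finset.sum_le_sum_of_subset hsub
    _ = ENNReal.ofReal (∑ n ∈ Finset.range (N + 1), matpow (G.pi ↑S) n a a) :=
        (ENNReal.ofReal_sum_of_nonneg fun n _ => hm_nonneg n a).symm
    _ ≤ ENNReal.ofReal ((rp c)⁻¹) := ENNReal.ofReal_le_ofReal hPN
    _ = (ENNReal.ofReal (rp c))⁻¹ := ENNReal.ofReal_inv_of_pos hrc


end NAG
end
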